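/- Fix p > 0 and x > 1. Set r*(δ) = 2δp/(p−δ), q*(δ) = (p−δ)/p, and P_δ(n, m) = (m/n) Γ(n(1+r*)−m)/(Γ(n r*) Γ(n−m+1)) (1−q*)^{r* n} (q*)^{n−m}. Then with n = x/δ and m = 1/δ, lim_{δ→0⁺} (1/δ) P_δ(x/δ, 1/δ) = (x−1)^{2x−1} e^{−(1/p + 2 ln p)x + 1/p} / (x Γ(2x)). -/

import Mathlib

open Real Filter Topology

/-- The discrete cascade-size probability, extended to real arguments via the
Gamma function: `P_δ(n, m) = (m/n) Γ(n(1+r*)−m)/(Γ(n r*) Γ(n−m+1)) (1−q*)^{r* n} (q*)^{n−m}`,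
with `r* = 2δp/(p−δ)` and `q* = (p−δ)/p`. -/
noncomputable def cascadeP (p δ n m : ℝ) : ℝ :=
  (m / n) * Real.Gamma (n * (1 + 2 * δ * p / (p - δ)) - m)
      / (Real.Gamma (n * (2 * δ * p / (p - δ))) * Real.Gamma (n - m + 1))
    * (1 - (p - δ) / p) ^ (2 * δ * p / (p - δ) * n) * ((p - δ) / p) ^ (n - m)

lemma gamma_upper (y s : ℝ) (hy : 0 < y) (hs : 0 ≤ s) :
    Real.Gamma (y + s) ≤ Real.Gamma y * (y + s) ^ s := by
  rcases hs.eq_or_lt with rfl | hs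
  · simp
  have hys : 0 < y + s := by linarith
  have hG : 0 < Real.Gamma y := Real.Gamma_pos_of_pos hy
  have hGys : 0 < Real.Gamma (y + s) := Real.Gamma_pos_of_pos hys
  have hs1 : 0 < s + 1 := by linarith
  have key := Real.convexOn_log_Gamma.2 (Set.mem_Ioi.2 hy)
      (Set.mem_Ioi.2 (show (0:ℝ) < y + s + 1 by linarith))
      (show (0:ℝ) ≤ 1/(s+1) by positivity)
      (show (0:ℝ) ≤ s/(s+1) by positivity)
      (by field_simp; ring)
  have hpt : (1/(s+1)) • y + (s/(s+1)) • (y + s + 1) = y + s := by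
    simp only [smul_eq_mul]; rw [div_mul_eq_mul_div, div_mul_eq_mul_div, ← add_div, div_eq_iff hs1.ne']; ring
  rw [hpt] at key
  simp only [smul_eq_mul, Function.comp_apply] at key
  have hrec : Real.Gamma (y + s + 1) = (y + s) * Real.Gamma (y + s) :=
    Real.Gamma_add_one hys.ne'
  rw [hrec, Real.log_mul hys.ne' hGys.ne'] at key
  -- key : log Γ(y+s) ≤ (1/(s+1)) log Γ(y) + (s/(s+1)) (log (y+s) + log Γ(y+s))
  have key2 : Real.log (Real.Gamma (y + s)) ≤ Real.log (Real.Gamma y) + s * Real.log (y + s) := by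
    have h := mul_le_mul_of_nonneg_left key hs1.le
    have e1 : (s+1) * ((1/(s+1)) * Real.log (Real.Gamma y)
        + (s/(s+1)) * (Real.log (y+s) + Real.log (Real.Gamma (y+s))))
        = Real.log (Real.Gamma y) + s * Real.log (y+s) + s * Real.log (Real.Gamma (y+s)) := by
      field_simp; ring
    rw [e1] at h
    nlinarith [h]
  calc Real.Gamma (y + s) = Real.exp (Real.log (Real.Gamma (y+s))) := (Real.exp_log hGys).symm
    _ ≤ Real.exp (Real.log (Real.Gamma y) + s * Real.log (y + s)) := Real.exp_le_exp.2 key2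
    _ = Real.Gamma y * (y + s) ^ s := by
        rw [Real.exp_add, Real.exp_log hG, Real.rpow_def_of_pos hys, mul_comm s]

lemma gamma_lower (y s : ℝ) (hy : 0 < y) (hs : 1 ≤ s) :
    Real.Gamma y * y ^ s ≤ Real.Gamma (y + s) := by
  have hs0 : 0 < s := by linarith
  have hys : 0 < y + s := by linarith
  have hG : 0 < Real.Gamma y := Real.Gamma_pos_of_pos hy
  have hGys : 0 < Real.Gamma (y + s) := Real.Gamma_pos_of_pos hys
  have key := Real.convexOn_log_Gamma.2 (Set.mem_Ioi.2 hy) (Set.mem_Ioi.2 hys)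
      (show (0:ℝ) ≤ 1 - 1/s by
        have : 1/s ≤ 1 := by rw [div_le_one hs0]; exact hs
        linarith)
      (show (0:ℝ) ≤ 1/s by positivity)
      (by ring)
  have hpt : (1 - 1/s) • y + (1/s) • (y + s) = y + 1 := by
    simp only [smul_eq_mul]; rw [sub_mul, one_mul, mul_add, one_div_mul_cancel hs0.ne']; ring
  rw [hpt] at key
  simp only [smul_eq_mul, Function.comp_apply] at key
  rw [Real.Gamma_add_one hy.ne', Real.log_mul hy.ne' hG.ne'] at key
  -- log y + log Γ y ≤ (1-1/s) log Γ y + (1/s) log Γ (y+s)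
  have key2 : Real.log (Real.Gamma y) + s * Real.log y ≤ Real.log (Real.Gamma (y + s)) := by
    have h := mul_le_mul_of_nonneg_left key hs0.le
    have e1 : s * ((1 - 1/s) * Real.log (Real.Gamma y) + (1/s) * Real.log (Real.Gamma (y+s)))
        = s * Real.log (Real.Gamma y) - Real.log (Real.Gamma y) + Real.log (Real.Gamma (y+s)) := by
      field_simp
    rw [e1] at h
    nlinarith [h]
  calc Real.Gamma y * y ^ s
      = Real.exp (Real.log (Real.Gamma y) + s * Real.log y) := by
        rw [Real.exp_add, Real.exp_log hG, Real.rpow_def_of_pos hy, mul_comm s]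
    _ ≤ Real.exp (Real.log (Real.Gamma (y+s))) := Real.exp_le_exp.2 key2
    _ = Real.Gamma (y + s) := Real.exp_log hGys

/-- The continuum limit of the discrete cascade distribution: with `n = x/δ` and
`m = 1/δ`, `lim_{δ→0⁺} (1/δ) P_δ(x/δ, 1/δ) = (x−1)^{2x−1} e^{−(1/p+2 ln p)x+1/p}/(x Γ(2x))`. -/
theorem cascade_continuum_limit (p x : ℝ) (hp : 0 < p) (hx : 1 < x) :
    Tendsto (fun δ : ℝ => (1 / δ) * cascadeP p δ (x / δ) (1 / δ))
      (𝓝[>] 0)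
      (𝓝 ((x - 1) ^ (2 * x - 1) * Real.exp (-(1 / p + 2 * Real.log p) * x + 1 / p)
            / (x * Real.Gamma (2 * x)))) := by
  have hx1 : (0:ℝ) < x - 1 := by linarith
  have hx0 : (0:ℝ) < x := by linarith
  set A : ℝ → ℝ := fun δ => (x - 1) / δ with hA
  set C : ℝ → ℝ := fun δ => 2 * x * p / (p - δ) with hC
  set R : ℝ → ℝ := fun δ =>
    Real.Gamma (A δ + C δ) / (Real.Gamma (A δ + 1) * (A δ) ^ (C δ - 1)) with hRdef
  set G : ℝ → ℝ := fun δ =>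
    (x - 1) ^ (C δ - 1) * p ^ (-(C δ)) * (1 - δ/p) ^ (A δ) / (x * Real.Gamma (C δ)) with hGdef
  -- limits of ingredients
  have hmem : Set.Ioo (0:ℝ) p ∈ 𝓝[>] (0:ℝ) := Ioo_mem_nhdsGT_of_mem (by simp [hp])
  have hC2x : Tendsto C (𝓝[>] 0) (𝓝 (2 * x)) := by
    have hct : ContinuousAt (fun δ : ℝ => 2 * x * p / (p - δ)) 0 :=
      (continuousAt_const.div (continuousAt_const.sub continuousAt_id) (by simpa using hp.ne'))
    have h0 : Tendsto C (𝓝[>] 0) (𝓝 (2 * x * p / (p - 0))) :=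
      hct.tendsto.mono_left nhdsWithin_le_nhds
    have hval0 : 2 * x * p / (p - 0) = 2 * x := by rw [sub_zero, mul_div_assoc, div_self hp.ne', mul_one]
    rwa [hval0] at h0
  have hAtop : Tendsto A (𝓝[>] 0) atTop := by
    simpa [hA, div_eq_mul_inv] using tendsto_inv_nhdsGT_zero.const_mul_atTop hx1
  -- limit of (1 - δ/p) ^ A δ
  have hlogslope : Tendsto (fun δ : ℝ => A δ * Real.log (1 - δ/p)) (𝓝[>] 0)
      (𝓝 (-(x-1)/p)) := by
    have hder : HasDerivAt (fun δ : ℝ => Real.log (1 - δ/p)) (-(1/p)) 0 := by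
      have h1 : HasDerivAt (fun δ : ℝ => 1 - δ/p) (-(1/p)) 0 := by
        simpa using ((hasDerivAt_id (0:ℝ)).div_const p).const_sub 1
      have := h1.log (by norm_num)
      simpa using this
    have hslope := hasDerivAt_iff_tendsto_slope.mp hder
    have hsub : 𝓝[>] (0:ℝ) ≤ 𝓝[≠] (0:ℝ) :=
      nhdsWithin_mono _ (fun y hy => ne_of_gt hy)
    have h2 : Tendsto (fun δ : ℝ => (x-1) * slope (fun δ : ℝ => Real.log (1 - δ/p)) 0 δ)
        (𝓝[>] 0) (𝓝 ((x-1) * -(1/p))) :=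
      (hslope.mono_left hsub).const_mul _
    have heq : ∀ᶠ δ in 𝓝[>] (0:ℝ),
        (x-1) * slope (fun δ : ℝ => Real.log (1 - δ/p)) 0 δ = A δ * Real.log (1 - δ/p) := by
      filter_upwards [self_mem_nhdsWithin] with δ hδ
      have hδ0 : δ ≠ 0 := ne_of_gt hδ
      simp [slope, hA, div_eq_mul_inv]
      ring
    have := h2.congr' heq
    convert this using 2
    ring
  have hqA : Tendsto (fun δ : ℝ => (1 - δ/p) ^ (A δ)) (𝓝[>] 0)
      (𝓝 (Real.exp (-(x-1)/p))) := by
    have h1 : Tendsto (fun δ : ℝ => Real.exp (A δ * Real.log (1 - δ/p))) (𝓝[>] 0)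
        (𝓝 (Real.exp (-(x-1)/p))) := (Real.continuous_exp.tendsto _).comp hlogslope
    refine h1.congr' ?_
    filter_upwards [hmem] with δ hδ
    have hbase : 0 < 1 - δ/p := by
      have := hδ.2; have := hδ.1
      rw [sub_pos, div_lt_one hp]; exact hδ.2
    rw [Real.rpow_def_of_pos hbase, mul_comm]
  -- R → 1 by squeezing
  have hCgt2 : ∀ δ ∈ Set.Ioo (0:ℝ) p, 2 ≤ C δ - 1 + 1 ∧ 1 ≤ C δ - 1 := by
    intro δ hδ
    have hpd : 0 < p - δ := by linarith [hδ.2]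
    have : 2 ≤ C δ := by
      rw [hC]; rw [le_div_iff₀ hpd]; nlinarith [hδ.1]
    constructor <;> linarith
  have hApos : ∀ δ ∈ Set.Ioo (0:ℝ) p, 0 < A δ := fun δ hδ => div_pos hx1 hδ.1
  have hLlim : Tendsto (fun δ => ((A δ + 1)/(A δ)) ^ (C δ - 1)) (𝓝[>] 0) (𝓝 1) := by
    have hbase : Tendsto (fun δ => (A δ + 1)/(A δ)) (𝓝[>] 0) (𝓝 1) := by
      have h1 : Tendsto (fun δ => 1 + (A δ)⁻¹) (𝓝[>] 0) (𝓝 (1 + 0)) :=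
        tendsto_const_nhds.add (hAtop.inv_tendsto_atTop)
      have h1' : Tendsto (fun δ => 1 + (A δ)⁻¹) (𝓝[>] 0) (𝓝 1) := by simpa using h1
      refine h1'.congr' ?_
      filter_upwards [hmem] with δ hδ
      field_simp [(hApos δ hδ).ne']
    have h2 : Tendsto (fun δ => ((A δ + 1)/(A δ)) ^ (C δ - 1)) (𝓝[>] 0)
        (𝓝 ((1:ℝ) ^ (2*x - 1))) :=
      hbase.rpow (hC2x.sub tendsto_const_nhds) (Or.inl one_ne_zero)
    simpa using h2
  have hUlim : Tendsto (fun δ => ((A δ + C δ)/(A δ)) ^ (C δ - 1)) (𝓝[>] 0) (𝓝 1) := by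
    have hbase : Tendsto (fun δ => (A δ + C δ)/(A δ)) (𝓝[>] 0) (𝓝 1) := by
      have h1 : Tendsto (fun δ => 1 + (C δ)/(A δ)) (𝓝[>] 0) (𝓝 (1 + 0)) :=
        tendsto_const_nhds.add (hC2x.div_atTop hAtop)
      have h1' : Tendsto (fun δ => 1 + (C δ)/(A δ)) (𝓝[>] 0) (𝓝 1) := by simpa using h1
      refine h1'.congr' ?_
      filter_upwards [hmem] with δ hδ
      field_simp [(hApos δ hδ).ne']
    have h2 : Tendsto (fun δ => ((A δ + C δ)/(A δ)) ^ (C δ - 1)) (𝓝[>] 0)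
        (𝓝 ((1:ℝ) ^ (2*x - 1))) :=
      hbase.rpow (hC2x.sub tendsto_const_nhds) (Or.inl one_ne_zero)
    simpa using h2
  have hRlim : Tendsto R (𝓝[>] 0) (𝓝 1) := by
    refine tendsto_of_tendsto_of_tendsto_of_le_of_le' hLlim hUlim ?_ ?_
    · filter_upwards [hmem] with δ hδ
      have hA0 := hApos δ hδ
      have hA1 : (0:ℝ) < A δ + 1 := by linarith
      have hs := (hCgt2 δ hδ).2
      have hlow := gamma_lower (A δ + 1) (C δ - 1) hA1 hs
      have hrw : A δ + 1 + (C δ - 1) = A δ + C δ := by ring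
      rw [hrw] at hlow
      have hG1 : 0 < Real.Gamma (A δ + 1) := Real.Gamma_pos_of_pos hA1
      have hP3 : (0:ℝ) < (A δ) ^ (C δ - 1) := Real.rpow_pos_of_pos hA0 _
      rw [hRdef]
      simp only
      rw [Real.div_rpow hA1.le hA0.le, div_le_div_iff₀ hP3 (by positivity)]
      calc (A δ + 1) ^ (C δ - 1) * (Real.Gamma (A δ + 1) * A δ ^ (C δ - 1))
          = (Real.Gamma (A δ + 1) * (A δ + 1) ^ (C δ - 1)) * A δ ^ (C δ - 1) := by ring
        _ ≤ Real.Gamma (A δ + C δ) * A δ ^ (C δ - 1) :=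
            mul_le_mul_of_nonneg_right hlow hP3.le
    · filter_upwards [hmem] with δ hδ
      have hA0 := hApos δ hδ
      have hA1 : (0:ℝ) < A δ + 1 := by linarith
      have hs := (hCgt2 δ hδ).2
      have hup := gamma_upper (A δ + 1) (C δ - 1) hA1 (by linarith)
      have hrw : A δ + 1 + (C δ - 1) = A δ + C δ := by ring
      rw [hrw] at hup
      have hG1 : 0 < Real.Gamma (A δ + 1) := Real.Gamma_pos_of_pos hA1
      have hP3 : (0:ℝ) < (A δ) ^ (C δ - 1) := Real.rpow_pos_of_pos hA0 _
      rw [hRdef]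
      simp only
      have hACpos : (0:ℝ) < A δ + C δ := by nlinarith [(hCgt2 δ hδ).1]
      rw [Real.div_rpow hACpos.le hA0.le, div_le_div_iff₀ (by positivity) hP3]
      calc Real.Gamma (A δ + C δ) * A δ ^ (C δ - 1)
          ≤ (Real.Gamma (A δ + 1) * (A δ + C δ) ^ (C δ - 1)) * A δ ^ (C δ - 1) :=
            mul_le_mul_of_nonneg_right hup hP3.le
        _ = (A δ + C δ) ^ (C δ - 1) * (Real.Gamma (A δ + 1) * A δ ^ (C δ - 1)) := by ring
  -- limit of G
  have h2xne : ∀ m : ℕ, (2*x : ℝ) ≠ -m := by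
    intro m
    have : (0:ℝ) ≤ (m:ℝ) := Nat.cast_nonneg m
    nlinarith
  have hGamC : Tendsto (fun δ => Real.Gamma (C δ)) (𝓝[>] 0) (𝓝 (Real.Gamma (2*x))) :=
    ((Real.differentiableAt_Gamma h2xne).continuousAt.tendsto).comp hC2x
  have hP4 : Tendsto (fun δ => (x-1) ^ (C δ - 1)) (𝓝[>] 0) (𝓝 ((x-1) ^ (2*x - 1))) :=
    tendsto_const_nhds.rpow (hC2x.sub tendsto_const_nhds) (Or.inl hx1.ne')
  have hP5 : Tendsto (fun δ => p ^ (-(C δ))) (𝓝[>] 0) (𝓝 (p ^ (-(2*x)))) :=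
    tendsto_const_nhds.rpow hC2x.neg (Or.inl hp.ne')
  have hGlim : Tendsto G (𝓝[>] 0)
      (𝓝 ((x-1) ^ (2*x-1) * p ^ (-(2*x)) * Real.exp (-(x-1)/p) / (x * Real.Gamma (2*x)))) := by
    have hden : x * Real.Gamma (2*x) ≠ 0 := by
      have h := Real.Gamma_pos_of_pos (show (0:ℝ) < 2*x by linarith)
      positivity
    exact ((hP4.mul hP5).mul hqA).div (tendsto_const_nhds.mul hGamC) hden
  have hRG : Tendsto (fun δ => R δ * G δ) (𝓝[>] 0)
      (𝓝 (1 * ((x-1) ^ (2*x-1) * p ^ (-(2*x)) * Real.exp (-(x-1)/p) / (x * Real.Gamma (2*x))))) :=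
    hRlim.mul hGlim
  -- identify the limit value
  have hval : (1:ℝ) * ((x-1) ^ (2*x-1) * p ^ (-(2*x)) * Real.exp (-(x-1)/p) / (x * Real.Gamma (2*x)))
      = (x - 1) ^ (2 * x - 1) * Real.exp (-(1 / p + 2 * Real.log p) * x + 1 / p)
            / (x * Real.Gamma (2 * x)) := by
    rw [one_mul]
    congr 1
    rw [Real.rpow_def_of_pos hp, mul_assoc, ← Real.exp_add]
    congr 2
    ring
  rw [← hval]
  -- eventual equality of the two functions
  refine hRG.congr' ?_
  filter_upwards [hmem] with δ hδ
  have hδ0 : (0:ℝ) < δ := hδ.1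
  have hpd : (0:ℝ) < p - δ := by linarith [hδ.2]
  have hA0 : 0 < A δ := hApos δ hδ
  have hA1 : (0:ℝ) < A δ + 1 := by linarith
  have hCpos : (0:ℝ) < C δ := by nlinarith [(hCgt2 δ hδ).1]
  have hbase : 0 < 1 - δ/p := by rw [sub_pos, div_lt_one hp]; exact hδ.2
  -- rewrite cascadeP arguments
  have e1 : x/δ * (1 + 2*δ*p/(p-δ)) - 1/δ = A δ + C δ := by
    rw [hA, hC]; field_simp; ring
  have e2 : x/δ * (2*δ*p/(p-δ)) = C δ := by
    rw [hC]; field_simp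
  have e3 : x/δ - 1/δ + 1 = A δ + 1 := by
    rw [hA]; field_simp
  have e4 : (1:ℝ) - (p - δ)/p = δ/p := by field_simp; ring
  have e5 : 2*δ*p/(p-δ) * (x/δ) = C δ := by
    rw [hC]; field_simp
  have e6 : (p - δ)/p = 1 - δ/p := by field_simp
  have e7 : x/δ - 1/δ = A δ := by rw [hA]; field_simp
  have e8 : (1:ℝ)/δ / (x/δ) = 1/x := by
    field_simp
  -- key rpow identity
  have key : (1/δ) * (δ/p) ^ (C δ) = (x-1) ^ (C δ - 1) * p ^ (-(C δ)) / (A δ) ^ (C δ - 1) := by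
    rw [Real.div_rpow hδ0.le hp.le, Real.rpow_neg hp.le]
    rw [hA, Real.div_rpow hx1.le hδ0.le]
    rw [show (C δ : ℝ) = (C δ - 1) + 1 by ring, Real.rpow_add hδ0, Real.rpow_one]
    have hd : (0:ℝ) < δ ^ (C δ - 1) := Real.rpow_pos_of_pos hδ0 _
    have hxp : (0:ℝ) < (x-1) ^ (C δ - 1) := Real.rpow_pos_of_pos hx1 _
    have hpp : (0:ℝ) < p ^ ((C δ - 1) + 1) := Real.rpow_pos_of_pos hp _
    field_simp
    ring
  -- put everything together
  rw [cascadeP, e1, e2, e3, e4, e5, e6, e7, e8]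
  rw [hRdef, hGdef]
  simp only
  have hG1 : (0:ℝ) < Real.Gamma (A δ + 1) := Real.Gamma_pos_of_pos hA1
  have hG2 : (0:ℝ) < Real.Gamma (C δ) := Real.Gamma_pos_of_pos hCpos
  have hP3 : (0:ℝ) < (A δ) ^ (C δ - 1) := Real.rpow_pos_of_pos hA0 _
  have lhs_eq : (1/δ) * (1/x * Real.Gamma (A δ + C δ) / (Real.Gamma (C δ) * Real.Gamma (A δ + 1))
        * (δ/p) ^ (C δ) * (1 - δ/p) ^ (A δ))
      = ((1/δ) * (δ/p) ^ (C δ)) * (1/x * Real.Gamma (A δ + C δ)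
          / (Real.Gamma (C δ) * Real.Gamma (A δ + 1)) * (1 - δ/p) ^ (A δ)) := by ring
  rw [lhs_eq, key]
  field_simp
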